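/- Let α ∈ ℝ with α ≠ 0, let σ ∈ ℝ with σ ≠ 0 and σ ≠ 1, let K, C ∈ ℝ, and let q > 0 satisfy |ασq| < 1. For β ∈ (0,1) define U(β) = (Kσ/(σ−1))·(1+ασq)^{β−1/σ}·q^{1−β}·[1 + ((β−1/σ)/(1−β))·∑_{n=0}^∞ ((1−1/σ)_n (1)_n/(2−β)_n)·(−ασq)^n/n!] + C. Then U(β) tends to (K/(α(σ−1)))·[(1+ασq)^{(σ−1)/σ} − 1] + C as β tends to 0 from above. (The limiting expression is the HARA utility.) -/

import Mathlib

open Filter Real Set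

namespace LFRRA

/-- normalized Pochhammer coefficient `(b)_n / n!` -/
noncomputable def pc (b : ℝ) (n : ℕ) : ℝ := (ascPochhammer ℝ n).eval b / (Nat.factorial n : ℝ)

lemma poch_succ_right (b : ℝ) (n : ℕ) :
    (ascPochhammer ℝ (n+1)).eval b = (ascPochhammer ℝ n).eval b * (b + n) := by
  simp [ascPochhammer_succ_eval]

lemma poch_succ_left (b : ℝ) (n : ℕ) :
    (ascPochhammer ℝ (n+1)).eval b = b * (ascPochhammer ℝ n).eval (b + 1) := by
  rw [ascPochhammer_succ_left]
  simp [Polynomial.eval_comp]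

lemma poch_nonneg {b : ℝ} (hb : 0 ≤ b) (n : ℕ) : 0 ≤ (ascPochhammer ℝ n).eval b := by
  induction n with
  | zero => simp
  | succ n ih => rw [poch_succ_right]; positivity

lemma poch_mono {b c : ℝ} (hb : 0 ≤ b) (hbc : b ≤ c) (n : ℕ) :
    (ascPochhammer ℝ n).eval b ≤ (ascPochhammer ℝ n).eval c := by
  induction n with
  | zero => simp
  | succ n ih =>
      rw [poch_succ_right, poch_succ_right]
      have h1 : (0:ℝ) ≤ b + n := by positivity
      have := poch_nonneg hb n
      nlinarith [poch_nonneg (hb.trans hbc) n]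

lemma abs_poch_le (b : ℝ) (n : ℕ) :
    |(ascPochhammer ℝ n).eval b| ≤ (ascPochhammer ℝ n).eval (|b| + 1) := by
  induction n with
  | zero => simp
  | succ n ih =>
      rw [poch_succ_right, poch_succ_right, abs_mul]
      have h1 : |b + (n:ℝ)| ≤ |b| + 1 + n := by
        calc |b + (n:ℝ)| ≤ |b| + n := by simpa using abs_add_le b n
        _ ≤ |b| + 1 + n := by linarith
      have h2 : (0:ℝ) ≤ |b| + 1 + n := by positivity
      have h3 := abs_nonneg ((ascPochhammer ℝ n).eval b)
      have h4 := poch_nonneg (by positivity : (0:ℝ) ≤ |b| + 1) n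
      nlinarith

lemma poch_pos {b : ℝ} (hb : 0 < b) (n : ℕ) : 0 < (ascPochhammer ℝ n).eval b :=
  ascPochhammer_pos n b hb

lemma pc_zero (b : ℝ) : pc b 0 = 1 := by simp [pc]

lemma pc_succ (b : ℝ) (n : ℕ) : ((n:ℝ)+1) * pc b (n+1) = b * pc (b+1) n := by
  have hn : (Nat.factorial (n+1) : ℝ) = ((n:ℝ)+1) * (Nat.factorial n : ℝ) := by
    push_cast [Nat.factorial_succ]; ring
  have hf : (Nat.factorial n : ℝ) ≠ 0 := Nat.cast_ne_zero.2 (Nat.factorial_ne_zero n)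
  have hf1 : ((n:ℝ)+1) ≠ 0 := by positivity
  rw [pc, pc, poch_succ_left, hn]
  field_simp

lemma pc_pos {b : ℝ} (hb : 0 < b) (n : ℕ) : 0 < pc b n := by
  have := poch_pos hb n
  have : (0:ℝ) < (Nat.factorial n : ℝ) := by positivity
  unfold pc; positivity

lemma abs_pc_le (b : ℝ) (n : ℕ) : |pc b n| ≤ pc (|b| + 1) n := by
  unfold pc
  rw [abs_div, abs_of_nonneg (by positivity : (0:ℝ) ≤ (Nat.factorial n : ℝ))]
  exact div_le_div_of_nonneg_right (abs_poch_le b n) (by positivity) |>.trans_eq rfl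

/-- ratio-test summability of `(e)_n r^n / n!` for `e > 0`, `0 ≤ r < 1`. -/
lemma summable_pc {e : ℝ} (he : 0 < e) {r : ℝ} (hr0 : 0 ≤ r) (hr : r < 1) :
    Summable (fun n => pc e n * r ^ n) := by
  rcases eq_or_lt_of_le hr0 with h0 | h0
  · apply summable_of_ne_finset_zero (s := {0})
    intro n hn
    simp only [Finset.mem_singleton] at hn
    simp [← h0, zero_pow hn]
  · apply summable_of_ratio_test_tendsto_lt_one hr
    · filter_upwards with n
      exact ne_of_gt (mul_pos (pc_pos he n) (pow_pos h0 n))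
    · have hterm : ∀ n : ℕ, ‖pc e (n+1) * r ^ (n+1)‖ / ‖pc e n * r ^ n‖
          = r + (e - 1) * r / ((n:ℝ) + 1) := by
        intro n
        have h1 : pc e (n+1) = pc e n * (e + n) / ((n:ℝ)+1) := by
          have hn : (Nat.factorial (n+1) : ℝ) = ((n:ℝ)+1) * (Nat.factorial n : ℝ) := by
            push_cast [Nat.factorial_succ]; ring
          rw [pc, pc, poch_succ_right, hn, div_mul_eq_mul_div, div_div,
            mul_comm ((n:ℝ)+1)]
        have hp := pc_pos he n
        have hp1 := pc_pos he (n+1)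
        have hr1 : (0:ℝ) < r ^ n := by positivity
        rw [norm_mul, norm_mul, Real.norm_eq_abs, Real.norm_eq_abs, Real.norm_eq_abs,
          Real.norm_eq_abs, abs_of_pos hp, abs_of_pos hp1,
          abs_of_pos (by positivity : (0:ℝ) < r ^ (n+1)), abs_of_pos hr1, h1, pow_succ]
        have hne : ((n:ℝ)+1) ≠ 0 := by positivity
        field_simp
        ring
      simp_rw [hterm]
      have : Tendsto (fun n : ℕ => (e - 1) * r / ((n:ℝ) + 1)) atTop (nhds 0) := by
        have := tendsto_one_div_add_atTop_nhds_zero_nat (𝕜 := ℝ)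
        have h2 := this.const_mul ((e-1)*r)
        simpa [div_eq_mul_inv, mul_comm, mul_assoc] using h2
      simpa using tendsto_const_nhds.add this

lemma summable_pc_mul {e : ℝ} (he : 0 < e) {r : ℝ} (hr0 : 0 ≤ r) (hr : r < 1) :
    Summable (fun n : ℕ => (n:ℝ) * pc e n * r ^ n) := by
  rw [← summable_nat_add_iff 1]
  have h := (summable_pc (by linarith : (0:ℝ) < e + 1) hr0 hr).mul_left (e * r)
  apply h.congr
  intro n
  push_cast
  rw [pow_succ]
  linear_combination (-(r ^ n * r)) * pc_succ e n


lemma summable_pcz (b : ℝ) {z : ℝ} (hz : |z| < 1) :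
    Summable (fun n : ℕ => pc b n * z ^ n) := by
  apply Summable.of_norm_bounded (summable_pc (by positivity : (0:ℝ) < |b| + 1)
    (abs_nonneg z) hz)
  intro n
  rw [norm_mul, Real.norm_eq_abs, Real.norm_eq_abs, abs_pow]
  exact mul_le_mul_of_nonneg_right (abs_pc_le b n) (by positivity)

/-- The binomial series function. -/
noncomputable def Fb (b z : ℝ) : ℝ := ∑' n : ℕ, pc b n * z ^ n

lemma Fb_hasSum (b : ℝ) {z : ℝ} (hz : |z| < 1) :
    HasSum (fun n : ℕ => pc b n * z ^ n) (Fb b z) := (summable_pcz b hz).hasSum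

lemma pc_sub (b : ℝ) (n : ℕ) : pc (b+1) (n+1) - pc (b+1) n = pc b (n+1) := by
  have hn : (Nat.factorial (n+1) : ℝ) = ((n:ℝ)+1) * (Nat.factorial n : ℝ) := by
    push_cast [Nat.factorial_succ]; ring
  have hf : (Nat.factorial n : ℝ) ≠ 0 := Nat.cast_ne_zero.2 (Nat.factorial_ne_zero n)
  have hf1 : ((n:ℝ)+1) ≠ 0 := by positivity
  rw [pc, pc, pc, poch_succ_right, poch_succ_left, hn]
  field_simp
  ring

lemma Fb_rec (b : ℝ) {z : ℝ} (hz : |z| < 1) : Fb b z = (1 - z) * Fb (b+1) z := by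
  have h1 := Fb_hasSum (b+1) hz
  have h2 := h1.mul_left z
  set d : ℕ → ℝ := fun n => Nat.casesOn n 0 (fun m => pc (b+1) m * z ^ (m+1)) with hd
  have h2' : HasSum (fun n => d (n+1)) (z * Fb (b+1) z) := by
    apply h2.congr_fun
    intro n
    simp only [hd, pow_succ]
    ring
  have h3 : HasSum d (z * Fb (b+1) z) := by
    have := (hasSum_nat_add_iff (f := d) 1).1 h2'
    simpa [hd] using this
  have h4 := h1.sub h3
  have h5 : (fun n => pc (b+1) n * z ^ n - d n) = (fun n : ℕ => pc b n * z ^ n) := by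
    funext n
    cases n with
    | zero => simp [hd, pc_zero]
    | succ m =>
        simp only [hd]
        linear_combination (z ^ (m+1)) * pc_sub b m
  rw [h5] at h4
  have h6 : Fb b z = Fb (b+1) z - z * Fb (b+1) z := h4.tsum_eq
  rw [h6]; ring

lemma Fb_hasDerivAt (b : ℝ) {z : ℝ} (hz : z ∈ Set.Ioo (-1:ℝ) 1) :
    HasDerivAt (Fb b) (b * Fb (b+1) z) z := by
  obtain ⟨hz1, hz2⟩ := hz
  have hzabs : |z| < 1 := abs_lt.2 ⟨hz1, hz2⟩
  set r : ℝ := (|z| + 1) / 2 with hr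
  have hr0 : 0 < r := by positivity
  have hrz : |z| < r := by rw [hr]; linarith [abs_nonneg z]
  have hr1 : r < 1 := by rw [hr]; linarith
  set u : ℕ → ℝ := fun n => (1/r) * ((n:ℝ) * pc (|b|+1) n * r ^ n) with hu
  have husum : Summable u :=
    (summable_pc_mul (by positivity : (0:ℝ) < |b|+1) hr0.le hr1).mul_left _
  have key : HasDerivAt (fun y => ∑' n : ℕ, pc b n * y ^ n)
      (∑' n : ℕ, pc b n * ((n:ℝ) * z ^ (n-1))) z := by
    apply hasDerivAt_tsum_of_isPreconnected husum (isOpen_Ioo (a := -r) (b := r))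
      (isPreconnected_Ioo) (fun n y _ => (hasDerivAt_pow n y).const_mul (pc b n))
      ?_ ?_ (summable_pcz b hzabs) ?_
    · intro n y hy
      have hyr : |y| ≤ r := le_of_lt (abs_lt.2 ⟨hy.1, hy.2⟩)
      rcases Nat.eq_zero_or_pos n with h | h
      · simp [h, hu]
      · obtain ⟨m, rfl⟩ := Nat.exists_eq_succ_of_ne_zero (Nat.pos_iff_ne_zero.mp h)
        show ‖pc b (m+1) * ((↑(m+1):ℝ) * y ^ (m+1-1))‖ ≤ 1 / r * ((↑(m+1):ℝ) * pc (|b|+1) (m+1) * r ^ (m+1))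
        simp only [Nat.add_sub_cancel]
        have h1 : ‖pc b (m+1) * ((↑(m+1):ℝ) * y ^ m)‖ = |pc b (m+1)| * ((m:ℝ)+1) * |y| ^ m := by
          rw [Real.norm_eq_abs, abs_mul, abs_mul, abs_pow, Nat.abs_cast]
          push_cast; ring
        rw [h1]
        have hle : |y| ^ m ≤ r ^ m := pow_le_pow_left₀ (abs_nonneg y) hyr _
        have h3 := abs_pc_le b (m+1)
        have h7 : (0:ℝ) ≤ pc (|b|+1) (m+1) := le_trans (abs_nonneg _) h3
        calc |pc b (m+1)| * ((m:ℝ)+1) * |y| ^ m ≤ pc (|b|+1) (m+1) * ((m:ℝ)+1) * r ^ m := by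
              apply mul_le_mul (mul_le_mul_of_nonneg_right h3 (by positivity)) hle (by positivity)
              positivity
          _ = 1 / r * ((↑(m+1):ℝ) * pc (|b|+1) (m+1) * r ^ (m+1)) := by
              rw [pow_succ]
              push_cast
              field_simp
    · exact ⟨(abs_lt.1 hrz).1, (abs_lt.1 hrz).2⟩
    · exact ⟨(abs_lt.1 hrz).1, (abs_lt.1 hrz).2⟩
  have hsum2 : HasSum (fun n : ℕ => pc b n * ((n:ℝ) * z ^ (n-1))) (b * Fb (b+1) z) := by
    have h1 := (Fb_hasSum (b+1) hzabs).mul_left b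
    have h2 : HasSum (fun n : ℕ => pc b (n+1) * (((n:ℕ)+1 : ℝ) * z ^ n)) (b * Fb (b+1) z) := by
      apply h1.congr_fun
      intro n
      linear_combination (z ^ n) * pc_succ b n
    have h3 := (hasSum_nat_add_iff (f := fun n : ℕ => pc b n * ((n:ℝ) * z ^ (n-1))) 1).1
      (by simpa using h2)
    simpa using h3
  rw [hsum2.tsum_eq] at key
  exact key

theorem Fb_eq_rpow (b : ℝ) {z : ℝ} (hz : |z| < 1) : Fb b z = (1 - z) ^ (-b) := by
  have hz' := abs_lt.1 hz
  have h1z : 0 < 1 - z := by linarith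
  set G : ℝ → ℝ := fun y => Fb b y * (1-y) ^ b with hG
  have hGderiv : ∀ y ∈ Set.Ioo (-1:ℝ) 1, HasDerivAt G 0 y := by
    intro y hy
    have h1y : 0 < 1 - y := by linarith [hy.2]
    have hyabs : |y| < 1 := abs_lt.2 ⟨hy.1, hy.2⟩
    have hF := Fb_hasDerivAt b hy
    have houter : HasDerivAt (fun x : ℝ => x ^ b) (b * (1-y) ^ (b-1)) (1-y) :=
      Real.hasDerivAt_rpow_const (Or.inl (ne_of_gt h1y))
    have hinner : HasDerivAt (fun y : ℝ => 1 - y) (-1) y := by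
      simpa using (hasDerivAt_id y).const_sub 1
    have hP : HasDerivAt (fun y : ℝ => (1-y) ^ b) (b * (1-y) ^ (b-1) * (-1)) y :=
      HasDerivAt.comp y houter hinner
    have hprod := hF.mul hP
    have hval : b * Fb (b+1) y * (1-y) ^ b + Fb b y * (b * (1-y) ^ (b-1) * (-1)) = 0 := by
      rw [Fb_rec b hyabs]
      have hpow : (1-y) * (1-y) ^ (b-1) = (1-y) ^ b := by
        nth_rewrite 1 [← Real.rpow_one (1-y)]
        rw [← Real.rpow_add h1y]
        norm_num
      linear_combination (-(b * Fb (b+1) y)) * hpow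
    rw [hval] at hprod
    exact hprod
  have hG0 : G 0 = 1 := by
    have hF0 : Fb b 0 = 1 := by
      rw [Fb, tsum_eq_single 0 (fun n hn => by simp [zero_pow hn])]
      simp [pc_zero]
    simp [hG, hF0]
  have hGz : G z = 1 := by
    rcases le_or_gt 0 z with h0 | h0
    · have := constant_of_has_deriv_right_zero (f := G) (a := 0) (b := z)
        (fun x hx => ((hGderiv x ⟨by linarith [hx.1], by linarith [hx.2]⟩).continuousAt).continuousWithinAt)
        (fun x hx => ((hGderiv x ⟨by linarith [hx.1], by linarith [hx.2]⟩).hasDerivWithinAt))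
        z (by constructor <;> linarith)
      rw [this, hG0]
    · have := constant_of_has_deriv_right_zero (f := G) (a := z) (b := 0)
        (fun x hx => ((hGderiv x ⟨by linarith [hx.1], by linarith [hx.2]⟩).continuousAt).continuousWithinAt)
        (fun x hx => ((hGderiv x ⟨by linarith [hx.1], by linarith [hx.2]⟩).hasDerivWithinAt))
        0 (by constructor <;> linarith)
      rw [this] at hG0
      rw [hG0]
  have hGz' : Fb b z * (1-z) ^ b = 1 := hGz
  have : Fb b z = ((1-z) ^ b)⁻¹ := eq_inv_of_mul_eq_one_left hGz'
  rw [this, ← Real.rpow_neg h1z.le]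

theorem binomial_hasSum (b : ℝ) {z : ℝ} (hz : |z| < 1) :
    HasSum (fun n : ℕ => pc b n * z ^ n) ((1 - z) ^ (-b) : ℝ) := by
  have := Fb_hasSum b hz
  rwa [Fb_eq_rpow b hz] at this

end LFRRA

namespace LFRRA
open Filter Real Set
lemma poch_two (n : ℕ) : (ascPochhammer ℝ n).eval 2 = ((n+1).factorial : ℝ) := by
  have h := poch_succ_left 1 n
  rw [ascPochhammer_eval_one] at h
  have : (1:ℝ) + 1 = 2 := by norm_num
  rw [this] at h
  linarith [h]

end LFRRA

/-- As `β → 0⁺` (within `(0,1)`), the LFRRA utility converges to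
the HARA utility `(K/(α(σ−1)))·[(1+ασq)^((σ−1)/σ) − 1] + C`. -/
theorem lfrra_utility_tendsto_HARA
    (α σ K C q : ℝ) (hα : α ≠ 0) (hσ0 : σ ≠ 0) (hσ1 : σ ≠ 1)
    (hq : 0 < q) (habs : |α * σ * q| < 1) :
    Filter.Tendsto (fun β : ℝ =>
        (K * σ / (σ - 1)) * (1 + α * σ * q) ^ (β - 1/σ) * q ^ (1 - β) *
          (1 + ((β - 1/σ) / (1 - β)) *
            ∑' (n : ℕ), ((ascPochhammer ℝ n).eval (1 - 1/σ) * (ascPochhammer ℝ n).eval 1 /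
              (ascPochhammer ℝ n).eval (2 - β)) * (-(α * σ * q)) ^ n / (Nat.factorial n : ℝ)) + C)
      (nhdsWithin 0 (Set.Ioo (0:ℝ) 1))
      (nhds ((K / (α * (σ - 1))) * ((1 + α * σ * q) ^ ((σ - 1)/σ) - 1) + C)) := by
  open LFRRA in
  set x : ℝ := α * σ * q with hxdef
  have hxne : x ≠ 0 := by
    simp only [hxdef]
    exact mul_ne_zero (mul_ne_zero hα hσ0) (ne_of_gt hq)
  set z : ℝ := -x with hzdef
  have hzabs : |z| < 1 := by rw [hzdef, abs_neg]; exact habs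
  have h1x : 0 < 1 + x := by
    have := (abs_lt.1 habs).1
    simp only [hxdef]; linarith
  set a : ℝ := 1 - 1/σ with hadef
  have hσ1' : σ - 1 ≠ 0 := sub_ne_zero.2 hσ1
  have hainv : 1/σ ≠ 0 := one_div_ne_zero hσ0
  have ha1 : a - 1 = -(1/σ) := by rw [hadef]; ring
  have ha1ne : a - 1 ≠ 0 := by rw [ha1]; simpa using hainv
  -- the limiting sum
  set g : ℕ → ℝ := fun n => ((ascPochhammer ℝ n).eval a * (ascPochhammer ℝ n).eval 1 /
      (ascPochhammer ℝ n).eval (2 - (0:ℝ))) * z ^ n / (Nat.factorial n : ℝ) with hgdef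
  have h1mz : (1:ℝ) - z = 1 + x := by rw [hzdef]; ring
  have h1ma : 1 - a = 1/σ := by rw [hadef]; ring
  -- HasSum for g
  have hgHasSum : HasSum g (((1+x) ^ (1/σ) - 1) / ((a-1) * z)) := by
    have h0 : HasSum (fun n : ℕ => pc (a-1) n * z ^ n) ((1+x) ^ (1/σ)) := by
      have := binomial_hasSum (a-1) hzabs
      rwa [neg_sub, h1mz, h1ma] at this
    have h1 : HasSum (fun n : ℕ => pc (a-1) (n+1) * z ^ (n+1)) ((1+x) ^ (1/σ) - 1) := by
      refine (hasSum_nat_add_iff (f := fun n : ℕ => pc (a-1) n * z ^ n) 1).2 ?_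
      convert h0 using 1
      · rfl
      simp [pc_zero]
    have h2 := h1.div_const ((a-1) * z)
    apply h2.congr_fun
    intro n
    have hfn : ((Nat.factorial n : ℝ)) ≠ 0 := Nat.cast_ne_zero.2 (Nat.factorial_ne_zero n)
    have hfn1 : ((Nat.factorial (n+1) : ℝ)) ≠ 0 := Nat.cast_ne_zero.2 (Nat.factorial_ne_zero (n+1))
    have hpsl : (ascPochhammer ℝ (n+1)).eval (a-1) = (a-1) * (ascPochhammer ℝ n).eval a := by
      have := poch_succ_left (a-1) n
      rw [sub_add_cancel] at this
      exact this
    have hzne : z ≠ 0 := by rw [hzdef]; simpa using hxne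
    have hcast : ((n+1).factorial : ℝ) = ((n:ℝ)+1) * (Nat.factorial n : ℝ) := by
      push_cast [Nat.factorial_succ]; ring
    simp only [hgdef, sub_zero, pc, hpsl, ascPochhammer_eval_one, poch_two, hcast]
    field_simp
    ring
  -- Step A: the sum tends to the limiting sum
  have hTend : Filter.Tendsto (fun β : ℝ => ∑' (n : ℕ),
      ((ascPochhammer ℝ n).eval a * (ascPochhammer ℝ n).eval 1 /
        (ascPochhammer ℝ n).eval (2 - β)) * z ^ n / (Nat.factorial n : ℝ))
      (nhdsWithin 0 (Set.Ioo (0:ℝ) 1)) (nhds (∑' n, g n)) := by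
    apply tendsto_tsum_of_dominated_convergence
      (bound := fun n : ℕ => pc (|a|+1) n * |z| ^ n)
      (summable_pc (by positivity) (abs_nonneg z) hzabs)
    · intro n
      have hden : ContinuousAt (fun β : ℝ => (ascPochhammer ℝ n).eval (2 - β)) 0 :=
        ((ascPochhammer ℝ n).continuous).continuousAt.comp
          ((continuous_const.sub continuous_id).continuousAt)
      have hdenne : (ascPochhammer ℝ n).eval ((2:ℝ) - 0) ≠ 0 := by
        rw [sub_zero, poch_two]
        positivity
      have hc : ContinuousAt (fun β : ℝ =>
          ((ascPochhammer ℝ n).eval a * (ascPochhammer ℝ n).eval 1 /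
            (ascPochhammer ℝ n).eval (2 - β)) * z ^ n / (Nat.factorial n : ℝ)) 0 := by
        apply ContinuousAt.div _ continuousAt_const
          (Nat.cast_ne_zero.2 (Nat.factorial_ne_zero n))
        exact (continuousAt_const.div hden hdenne).mul continuousAt_const
      exact (hc.tendsto).mono_left nhdsWithin_le_nhds
    · filter_upwards [self_mem_nhdsWithin] with β hβ
      intro n
      obtain ⟨hβ0, hβ1⟩ := hβ
      have hpos2 : (0:ℝ) < 2 - β := by linarith
      have hp2 : (0:ℝ) < (ascPochhammer ℝ n).eval (2 - β) := poch_pos hpos2 n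
      have hmono : ((Nat.factorial n : ℝ)) ≤ (ascPochhammer ℝ n).eval (2 - β) := by
        have := poch_mono (by norm_num : (0:ℝ) ≤ 1) (by linarith : (1:ℝ) ≤ 2 - β) n
        rwa [ascPochhammer_eval_one] at this
      have hfnpos : (0:ℝ) < (Nat.factorial n : ℝ) := by positivity
      rw [Real.norm_eq_abs, abs_div, abs_mul, abs_div, abs_mul, abs_pow]
      rw [abs_of_pos hp2, abs_of_pos hfnpos, ascPochhammer_eval_one,
        abs_of_pos hfnpos]
      have step1 : |(ascPochhammer ℝ n).eval a| * (Nat.factorial n : ℝ) /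
          (ascPochhammer ℝ n).eval (2 - β) ≤ |(ascPochhammer ℝ n).eval a| := by
        rw [div_le_iff₀ hp2]
        apply mul_le_mul_of_nonneg_left hmono (abs_nonneg _)
      calc |(ascPochhammer ℝ n).eval a| * (Nat.factorial n : ℝ) /
            (ascPochhammer ℝ n).eval (2 - β) * |z| ^ n / (Nat.factorial n : ℝ)
          ≤ |(ascPochhammer ℝ n).eval a| * |z| ^ n / (Nat.factorial n : ℝ) := by
            apply div_le_div_of_nonneg_right _ hfnpos.le |>.trans_eq rfl
            exact mul_le_mul_of_nonneg_right step1 (by positivity)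
        _ ≤ pc (|a|+1) n * |z| ^ n := by
            rw [div_eq_mul_inv, mul_right_comm]
            apply mul_le_mul_of_nonneg_right _ (by positivity)
            calc |(ascPochhammer ℝ n).eval a| * ((Nat.factorial n : ℝ))⁻¹
                = |pc a n| := by
                  rw [pc, abs_div, abs_of_pos hfnpos, div_eq_mul_inv]
              _ ≤ pc (|a|+1) n := abs_pc_le a n
  -- Step D: assemble
  have hc1 : Filter.Tendsto (fun β : ℝ => (1 + x) ^ (β - 1/σ))
      (nhdsWithin 0 (Set.Ioo (0:ℝ) 1)) (nhds ((1 + x) ^ (-(1/σ)))) := by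
    have h := (Real.continuousAt_const_rpow (ne_of_gt h1x) (b := -(1/σ)))
    have hexp : Filter.Tendsto (fun β : ℝ => β - 1/σ) (nhdsWithin 0 (Set.Ioo (0:ℝ) 1))
        (nhds (-(1/σ))) := by
      have : Filter.Tendsto (fun β : ℝ => β - 1/σ) (nhds 0) (nhds (0 - 1/σ)) :=
        (continuous_id.sub continuous_const).continuousAt
      simpa using this.mono_left nhdsWithin_le_nhds
    exact h.tendsto.comp hexp
  have hc2 : Filter.Tendsto (fun β : ℝ => q ^ (1 - β))
      (nhdsWithin 0 (Set.Ioo (0:ℝ) 1)) (nhds q) := by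
    have h := (Real.continuousAt_const_rpow (ne_of_gt hq) (b := (1:ℝ)))
    have hexp : Filter.Tendsto (fun β : ℝ => 1 - β) (nhdsWithin 0 (Set.Ioo (0:ℝ) 1))
        (nhds 1) := by
      have : Filter.Tendsto (fun β : ℝ => 1 - β) (nhds 0) (nhds (1 - 0)) :=
        (continuous_const.sub continuous_id).continuousAt
      simpa using this.mono_left nhdsWithin_le_nhds
    have := h.tendsto.comp hexp
    simpa [Real.rpow_one, Function.comp_def] using this
  have hc3 : Filter.Tendsto (fun β : ℝ => (β - 1/σ) / (1 - β))
      (nhdsWithin 0 (Set.Ioo (0:ℝ) 1)) (nhds (-(1/σ))) := by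
    have hnum : Filter.Tendsto (fun β : ℝ => β - 1/σ) (nhdsWithin 0 (Set.Ioo (0:ℝ) 1))
        (nhds (-(1/σ))) := by
      have : Filter.Tendsto (fun β : ℝ => β - 1/σ) (nhds 0) (nhds (0 - 1/σ)) :=
        (continuous_id.sub continuous_const).continuousAt
      simpa using this.mono_left nhdsWithin_le_nhds
    have hden : Filter.Tendsto (fun β : ℝ => 1 - β) (nhdsWithin 0 (Set.Ioo (0:ℝ) 1))
        (nhds 1) := by
      have : Filter.Tendsto (fun β : ℝ => 1 - β) (nhds 0) (nhds (1 - 0)) :=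
        (continuous_const.sub continuous_id).continuousAt
      simpa using this.mono_left nhdsWithin_le_nhds
    simpa [Pi.div_def] using hnum.div hden one_ne_zero
  have hbig := ((((tendsto_const_nhds (x := K * σ / (σ - 1))).mul hc1).mul hc2).mul
      ((tendsto_const_nhds (x := (1:ℝ))).add (hc3.mul hTend))).add
      (tendsto_const_nhds (x := C))
  have hT0 : ∑' n, g n = ((1+x) ^ (1/σ) - 1) / ((a-1) * z) := hgHasSum.tsum_eq
  have hfinal : K * σ / (σ - 1) * (1 + x) ^ (-(1/σ)) * q *
      (1 + -(1/σ) * (((1+x) ^ (1/σ) - 1) / ((a-1) * z))) + C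
      = K / (α * (σ - 1)) * ((1 + x) ^ ((σ - 1)/σ) - 1) + C := by
    set A : ℝ := (1+x) ^ (1/σ) with hAdef
    have hA : 0 < A := Real.rpow_pos_of_pos h1x _
    have e1 : (1+x) ^ (-(1/σ)) = A⁻¹ := Real.rpow_neg h1x.le _
    have e4 : (1+x) ^ ((σ-1)/σ) = (1+x) * A⁻¹ := by
      have hev : (σ-1)/σ = 1 + (-(1/σ)) := by field_simp; ring
      rw [hev, Real.rpow_add h1x, Real.rpow_one, e1]
    rw [e1, e4, ha1, hzdef, hxdef]
    field_simp
    ring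
  rw [hT0] at hbig
  have : (fun β : ℝ =>
        (K * σ / (σ - 1)) * (1 + x) ^ (β - 1/σ) * q ^ (1 - β) *
          (1 + ((β - 1/σ) / (1 - β)) *
            ∑' (n : ℕ), ((ascPochhammer ℝ n).eval a * (ascPochhammer ℝ n).eval 1 /
              (ascPochhammer ℝ n).eval (2 - β)) * z ^ n / (Nat.factorial n : ℝ)) + C)
      = (fun β : ℝ =>
        K * σ / (σ - 1) * (1 + x) ^ (β - 1/σ) * q ^ (1 - β) *
          (1 + (β - 1/σ) / (1 - β) *
            ∑' (n : ℕ), ((ascPochhammer ℝ n).eval a * (ascPochhammer ℝ n).eval 1 /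
              (ascPochhammer ℝ n).eval (2 - β)) * z ^ n / (Nat.factorial n : ℝ)) + C) := rfl
  rw [← hfinal]
  exact hbig
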